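/- Let A_S, A_T be generators of C₀-semigroups on L₂(m). Suppose for some C ≥ 0, fixed 0 ≤ f ∈ L_p(m), 0 ≤ g' ∈ L_{q'}(m), and all sufficiently large λ ∈ ℝ, the resolvent estimate ⟨(λ−A_T)⁻¹u, v'⟩ ≤ ⟨(λ−A_S)⁻¹u, v'⟩ + C⟨(λ−A_T)⁻¹u, g'⟩⟨f, (λ−A_S')⁻¹v'⟩ holds for all 0 ≤ u ∈ L₂∩L_q(m), 0 ≤ v' ∈ L₂∩L_{p'}(m), with both resolvents positivity preserving. Then by induction, for all n ∈ ℕ: ⟨(λ−A_T)⁻ⁿu, v'⟩ ≤ ⟨(λ−A_S)⁻ⁿu, v'⟩ + C ∑_{l=1}^{n} ⟨(λ−A_T)^{l−n−1}u, g'⟩⟨f, (λ−A_S')⁻ˡ v'⟩. -/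

import Mathlib

open MeasureTheory Set
open scoped ENNReal

/-- Induction on powers of resolvents: the resolvent estimate (c) of Theorem 3.6
iterates to powers of the resolvents. `RT l = (l−A_T)⁻¹`, `RS l = (l−A_S)⁻¹` and
`RS' l = (l−A_S')⁻¹` denote the resolvents (acting on `L₂(m)`). -/
theorem resolvent_power_estimate
    {Ω : Type*} [MeasurableSpace Ω] (μ : Measure Ω)
    (p q p' q' : ℝ≥0∞) [Fact (1 ≤ p)] [Fact (1 ≤ q)] [Fact (1 ≤ p')] [Fact (1 ≤ q')]
    (hp : 1 ≤ p) (hq : 1 ≤ q) (hpfin : p ≠ ∞) (hqfin : q ≠ ∞)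
    (hp' : p.HolderConjugate p') (hq' : q.HolderConjugate q')
    (RT RS RS' : ℝ → (Lp ℝ 2 μ →L[ℝ] Lp ℝ 2 μ)) (lam₀ : ℝ)
    -- positivity of the resolvents
    (hRTpos : ∀ lam ≥ lam₀, ∀ u : Lp ℝ 2 μ, 0 ≤ u → 0 ≤ RT lam u)
    (hRSpos : ∀ lam ≥ lam₀, ∀ u : Lp ℝ 2 μ, 0 ≤ u → 0 ≤ RS lam u)
    (hRS'pos : ∀ lam ≥ lam₀, ∀ v : Lp ℝ 2 μ, 0 ≤ v → 0 ≤ RS' lam v)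
    -- `T` acts on `L_q(m)`: its resolvent preserves `L₂ ∩ L_q(m)`
    (hRTq : ∀ lam ≥ lam₀, ∀ u : Lp ℝ 2 μ, MemLp (↑u) q μ → MemLp (↑(RT lam u)) q μ)
    -- `S` acts on `L_p(m)`: the dual resolvent preserves `L₂ ∩ L_{p'}(m)`
    (hRS'p' : ∀ lam ≥ lam₀, ∀ v : Lp ℝ 2 μ, MemLp (↑v) p' μ → MemLp (↑(RS' lam v)) p' μ)
    -- `RS'` is the dual of `RS`
    (hdual : ∀ lam ≥ lam₀, ∀ u v : Lp ℝ 2 μ,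
      ∫ x, (RS lam u) x * v x ∂μ = ∫ x, u x * (RS' lam v) x ∂μ)
    (f g' : Ω → ℝ) (hf : MemLp f p μ) (hf0 : 0 ≤ᵐ[μ] f)
    (hg' : MemLp g' q' μ) (hg'0 : 0 ≤ᵐ[μ] g')
    (C : ℝ) (hC : 0 ≤ C)
    -- the resolvent estimate for `n = 1`
    (hbase : ∀ lam ≥ lam₀, ∀ u v' : Lp ℝ 2 μ,
      0 ≤ u → MemLp (↑u) q μ → 0 ≤ v' → MemLp (↑v') p' μ →
      ∫ x, (RT lam u) x * v' x ∂μ ≤ (∫ x, (RS lam u) x * v' x ∂μ) +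
        C * (∫ x, (RT lam u) x * g' x ∂μ) * (∫ x, f x * (RS' lam v') x ∂μ)) :
    -- the estimate for all powers `n`
    ∀ lam ≥ lam₀, ∀ n : ℕ, 1 ≤ n → ∀ u v' : Lp ℝ 2 μ,
      0 ≤ u → MemLp (↑u) q μ → 0 ≤ v' → MemLp (↑v') p' μ →
      ∫ x, ((RT lam ^ n) u) x * v' x ∂μ ≤ (∫ x, ((RS lam ^ n) u) x * v' x ∂μ) +
        C * ∑ l ∈ Finset.Icc 1 n,
          (∫ x, ((RT lam ^ (n + 1 - l)) u) x * g' x ∂μ) *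
            (∫ x, f x * ((RS' lam ^ l) v') x ∂μ) := by

  intro lam hlam
  have dualpow : ∀ n : ℕ, ∀ u v : Lp ℝ 2 μ,
      ∫ x, ((RS lam ^ n) u) x * v x ∂μ = ∫ x, u x * ((RS' lam ^ n) v) x ∂μ := by
    intro n
    induction n with
    | zero => intro u v; simp
    | succ n ih =>
      intro u v
      have h1 : (RS lam ^ (n + 1)) u = (RS lam ^ n) (RS lam u) := by
        rw [pow_succ]; rfl
      have h2 : (RS' lam ^ (n + 1)) v = RS' lam ((RS' lam ^ n) v) := by
        rw [pow_succ']; rfl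
      rw [h1, ih (RS lam u) v, hdual lam hlam, h2]
  have posT : ∀ n : ℕ, ∀ u : Lp ℝ 2 μ, 0 ≤ u → 0 ≤ (RT lam ^ n) u := by
    intro n
    induction n with
    | zero => intro u hu; simpa using hu
    | succ n ih =>
      intro u hu
      rw [show (RT lam ^ (n + 1)) u = (RT lam ^ n) (RT lam u) from by rw [pow_succ]; rfl]
      exact ih _ (hRTpos lam hlam u hu)
  have posS' : ∀ n : ℕ, ∀ v : Lp ℝ 2 μ, 0 ≤ v → 0 ≤ (RS' lam ^ n) v := by
    intro n
    induction n with
    | zero => intro v hv; simpa using hv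
    | succ n ih =>
      intro v hv
      rw [show (RS' lam ^ (n + 1)) v = (RS' lam ^ n) (RS' lam v) from by rw [pow_succ]; rfl]
      exact ih _ (hRS'pos lam hlam v hv)
  have memS' : ∀ n : ℕ, ∀ v : Lp ℝ 2 μ, MemLp (↑v) p' μ → MemLp (↑((RS' lam ^ n) v)) p' μ := by
    intro n
    induction n with
    | zero => intro v hv; simpa using hv
    | succ n ih =>
      intro v hv
      rw [show (RS' lam ^ (n + 1)) v = (RS' lam ^ n) (RS' lam v) from by rw [pow_succ]; rfl]
      exact ih _ (hRS'p' lam hlam v hv)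
  intro n hn
  induction n, hn using Nat.le_induction with
  | base =>
    intro u v' hu huq hv' hv'p'
    have hb := hbase lam hlam u v' hu huq hv' hv'p'
    simpa [Finset.Icc_self, mul_assoc] using hb
  | succ n hn ih =>
    intro u v' hu huq hv' hv'p'
    have hTu : 0 ≤ RT lam u := hRTpos lam hlam u hu
    have hTuq : MemLp (↑(RT lam u)) q μ := hRTq lam hlam u huq
    have hSv : 0 ≤ (RS' lam ^ n) v' := posS' n v' hv'
    have hSvp : MemLp (↑((RS' lam ^ n) v')) p' μ := memS' n v' hv'p'
    have h1 : (RT lam ^ (n + 1)) u = (RT lam ^ n) (RT lam u) := by rw [pow_succ]; rfl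
    have hih := ih (RT lam u) v' hTu hTuq hv' hv'p'
    have hdn : ∫ x, ((RS lam ^ n) (RT lam u)) x * v' x ∂μ
        = ∫ x, (RT lam u) x * ((RS' lam ^ n) v') x ∂μ := dualpow n _ _
    have hb := hbase lam hlam u ((RS' lam ^ n) v') hu huq hSv hSvp
    have hdn2 : ∫ x, ((RS lam ^ (n + 1)) u) x * v' x ∂μ
        = ∫ x, (RS lam u) x * ((RS' lam ^ n) v') x ∂μ := by
      rw [show (RS lam ^ (n + 1)) u = (RS lam ^ n) (RS lam u) from by rw [pow_succ]; rfl]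
      exact dualpow n _ _
    have h3 : RS' lam ((RS' lam ^ n) v') = (RS' lam ^ (n + 1)) v' := by
      rw [pow_succ']; rfl
    -- rewrite the IH sum terms
    have hterm : ∀ l ∈ Finset.Icc 1 n,
        (∫ x, ((RT lam ^ (n + 1 - l)) (RT lam u)) x * g' x ∂μ) *
          (∫ x, f x * ((RS' lam ^ l) v') x ∂μ)
        = (∫ x, ((RT lam ^ (n + 1 + 1 - l)) u) x * g' x ∂μ) *
          (∫ x, f x * ((RS' lam ^ l) v') x ∂μ) := by
      intro l hl
      have hl' : l ≤ n := (Finset.mem_Icc.mp hl).2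
      have hexp : (RT lam ^ (n + 1 - l)) (RT lam u) = (RT lam ^ (n + 1 + 1 - l)) u := by
        rw [show n + 1 + 1 - l = (n + 1 - l) + 1 from by omega, pow_succ]; rfl
      rw [hexp]
    have hsum : ∑ l ∈ Finset.Icc 1 n,
        (∫ x, ((RT lam ^ (n + 1 - l)) (RT lam u)) x * g' x ∂μ) *
          (∫ x, f x * ((RS' lam ^ l) v') x ∂μ)
        = ∑ l ∈ Finset.Icc 1 n,
        (∫ x, ((RT lam ^ (n + 1 + 1 - l)) u) x * g' x ∂μ) *
          (∫ x, f x * ((RS' lam ^ l) v') x ∂μ) := Finset.sum_congr rfl hterm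
    have hsplit : ∑ l ∈ Finset.Icc 1 (n + 1),
        (∫ x, ((RT lam ^ (n + 1 + 1 - l)) u) x * g' x ∂μ) *
          (∫ x, f x * ((RS' lam ^ l) v') x ∂μ)
        = (∑ l ∈ Finset.Icc 1 n,
            (∫ x, ((RT lam ^ (n + 1 + 1 - l)) u) x * g' x ∂μ) *
              (∫ x, f x * ((RS' lam ^ l) v') x ∂μ))
          + (∫ x, ((RT lam ^ (n + 1 + 1 - (n + 1))) u) x * g' x ∂μ) *
              (∫ x, f x * ((RS' lam ^ (n + 1)) v') x ∂μ) :=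
      Finset.sum_Icc_succ_top (by omega) _
    have hlast : (RT lam ^ (n + 1 + 1 - (n + 1))) u = RT lam u := by
      rw [show n + 1 + 1 - (n + 1) = 1 from by omega, pow_one]
    calc ∫ x, ((RT lam ^ (n + 1)) u) x * v' x ∂μ
        = ∫ x, ((RT lam ^ n) (RT lam u)) x * v' x ∂μ := by rw [h1]
      _ ≤ (∫ x, ((RS lam ^ n) (RT lam u)) x * v' x ∂μ) +
          C * ∑ l ∈ Finset.Icc 1 n,
            (∫ x, ((RT lam ^ (n + 1 - l)) (RT lam u)) x * g' x ∂μ) *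
              (∫ x, f x * ((RS' lam ^ l) v') x ∂μ) := hih
      _ ≤ ((∫ x, (RS lam u) x * ((RS' lam ^ n) v') x ∂μ) +
            C * (∫ x, (RT lam u) x * g' x ∂μ) *
              (∫ x, f x * (RS' lam ((RS' lam ^ n) v')) x ∂μ)) +
          C * ∑ l ∈ Finset.Icc 1 n,
            (∫ x, ((RT lam ^ (n + 1 - l)) (RT lam u)) x * g' x ∂μ) *
              (∫ x, f x * ((RS' lam ^ l) v') x ∂μ) := by
          gcongr
          rw [hdn]
          exact hb
      _ = (∫ x, ((RS lam ^ (n + 1)) u) x * v' x ∂μ) +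
          C * ∑ l ∈ Finset.Icc 1 (n + 1),
            (∫ x, ((RT lam ^ (n + 1 + 1 - l)) u) x * g' x ∂μ) *
              (∫ x, f x * ((RS' lam ^ l) v') x ∂μ) := by
          rw [hsplit, ← hsum, hlast, h3, hdn2]
          ring
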